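/- Let E be the incidence matrix of a (n,k,γ,δ,λ)-BIBD and let the assignment matrix be A = E^T ∈ ℝ^{k×n}. Let B ∈ ℝ^{(mk)×n} be the baseline encoding matrix obtained by stacking A vertically m times, i.e. B^T = [A^T | A^T | … | A^T]. Then for every non-straggler set 𝓕 ⊆ {1,…,n} with |𝓕| = n−s ≥ 1, the approximation error satisfies Err_𝓕(B) = mk − δ²(n−s)/(δ + (n−s−1)λ). -/
import Mathlib


open MeasureTheory Matrix

noncomputable section

/-- Random-diagonal encoding matrix: the vertical stack of `A * D_1, …, A * D_m`,
with rows indexed by `Fin m × κ` (block `i`, row `r`). -/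
def encB {m : ℕ} {κ ν : Type*} (A : Matrix κ ν ℝ) (d : (Fin m × ν) → ℝ) :
    Matrix (Fin m × κ) ν ℝ :=
  Matrix.of fun p j => A p.2 j * d (p.1, j)

/-- The target matrix `F = [f_1 | … | f_m]`, where `f_i` is `1` on the `i`-th block. -/
def Fmat (m : ℕ) (κ : Type*) : Matrix (Fin m × κ) (Fin m) ℝ :=
  Matrix.of fun p i => if p.1 = i then 1 else 0

/-- Column submatrix corresponding to the non-straggler set `𝓕`. -/
def subCols {α ν : Type*} (M : Matrix α ν ℝ) (𝓕 : Finset ν) : Matrix α ↥𝓕 ℝ :=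
  M.submatrix id (fun j => (j : ν))

/-- Squared Frobenius norm. -/
def frobSq {α β : Type*} [Fintype α] [Fintype β] (M : Matrix α β ℝ) : ℝ :=
  ∑ i, ∑ j, (M i j) ^ 2

/-- The approximation error `Err_𝓕(B) = inf_R ‖B_𝓕 R − F‖_F²`. -/
noncomputable def err {m : ℕ} {κ ν : Type*} [Fintype κ] [Fintype ν]
    (B : Matrix (Fin m × κ) ν ℝ) (𝓕 : Finset ν) : ℝ :=
  ⨅ R : Matrix ↥𝓕 (Fin m) ℝ, frobSq (subCols B 𝓕 * R - Fmat m κ)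

/-- Vertical stacking of the matrices `A_1, …, A_m`. -/
def stackB {m : ℕ} {κ ν : Type*} (Am : Fin m → Matrix κ ν ℝ) :
    Matrix (Fin m × κ) ν ℝ :=
  Matrix.of fun p l => Am p.1 p.2 l

/-- exact approximation error of the baseline construction
(stacking the BIBD-transpose assignment matrix `m` times) for any non-straggler set of
size `n − s ≥ 1`. -/

lemma frobSq_nonneg {α β : Type*} [Fintype α] [Fintype β] (M : Matrix α β ℝ) :
    0 ≤ frobSq M :=
  Finset.sum_nonneg fun _ _ => Finset.sum_nonneg fun _ _ => sq_nonneg _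

lemma frobSq_split {α β γ : Type*} [Fintype α] [Fintype β] [Fintype γ]
    (M : Matrix α β ℝ) (R R₀ : Matrix β γ ℝ) (F : Matrix α γ ℝ)
    (h : Mᵀ * (M * R₀ - F) = 0) :
    frobSq (M * R - F) = frobSq (M * (R - R₀)) + frobSq (M * R₀ - F) := by
  have hY : ∀ b c, ∑ a, M a b * (M * R₀ - F) a c = 0 := by
    intro b c
    have := congrFun (congrFun h b) c
    simpa [Matrix.mul_apply, Matrix.transpose_apply] using this
  have hcross : ∑ a, ∑ c, (M * (R - R₀)) a c * (M * R₀ - F) a c = 0 := by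
    have hc : ∀ c, ∑ a, (M * (R - R₀)) a c * (M * R₀ - F) a c = 0 := by
      intro c
      calc ∑ a, (M * (R - R₀)) a c * (M * R₀ - F) a c
          = ∑ a, ∑ b, M a b * (R - R₀) b c * (M * R₀ - F) a c := by
            simp [Matrix.mul_apply, Finset.sum_mul]
        _ = ∑ b, (R - R₀) b c * ∑ a, M a b * (M * R₀ - F) a c := by
            rw [Finset.sum_comm]
            refine Finset.sum_congr rfl fun b _ => ?_
            rw [Finset.mul_sum]
            refine Finset.sum_congr rfl fun a _ => ?_
            ring
        _ = 0 := by
            simp only [Matrix.sub_apply] at hY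
            simp [hY]
    rw [Finset.sum_comm]
    simp only [hc]
    simp
  have hsplit : M * R - F = M * (R - R₀) + (M * R₀ - F) := by
    rw [Matrix.mul_sub]; abel
  rw [hsplit]
  unfold frobSq
  have hexp : ∀ a c, ((M * (R - R₀)) a c + (M * R₀ - F) a c) ^ 2
      = (M * (R - R₀)) a c ^ 2 + (M * R₀ - F) a c ^ 2
        + 2 * ((M * (R - R₀)) a c * (M * R₀ - F) a c) := by
    intro a c; ring
  simp only [Matrix.add_apply, hexp, Finset.sum_add_distrib, ← Finset.mul_sum]
  rw [hcross]
  ring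

theorem stmt19 (n k m γ δ lam s : ℕ) (hm : 0 < m) (hs : s < n)
    (E : Matrix (Fin n) (Fin k) ℝ)
    (hbin : ∀ i j, E i j = 0 ∨ E i j = 1)
    (hγ : ∀ j, ∑ i, E i j = (γ : ℝ))
    (hδ : ∀ i, ∑ j, E i j = (δ : ℝ))
    (hlam : ∀ i i', i ≠ i' → ∑ j, E i j * E i' j = (lam : ℝ))
    (hδlam : lam < δ)
    (𝓕 : Finset (Fin n)) (hcard : 𝓕.card = n - s) :
    err (stackB fun _ : Fin m => Eᵀ) 𝓕 =
      (m : ℝ) * k - (δ : ℝ) ^ 2 * ((n : ℝ) - s) / ((δ : ℝ) + ((n : ℝ) - s - 1) * lam) := by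
  classical
  have hq1 : 1 ≤ 𝓕.card := by rw [hcard]; omega
  have hQ : ((𝓕.card : ℕ) : ℝ) = (n : ℝ) - s := by rw [hcard, Nat.cast_sub hs.le]
  set D : ℝ := (δ : ℝ) + ((n : ℝ) - s - 1) * lam with hDdef
  have hlam0 : (0:ℝ) ≤ (lam:ℝ) := Nat.cast_nonneg _
  have hδ1 : (1:ℝ) ≤ (δ:ℝ) := by
    have : 1 ≤ δ := by omega
    exact_mod_cast this
  have hns1 : (0:ℝ) ≤ (n:ℝ) - s - 1 := by
    have h1 : (1:ℝ) ≤ ((𝓕.card : ℕ):ℝ) := by exact_mod_cast hq1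
    rw [hQ] at h1; linarith
  have hDpos : 0 < D := by
    have h2 := mul_nonneg hns1 hlam0
    rw [hDdef]; linarith
  have hmR : (0:ℝ) < (m:ℝ) := by exact_mod_cast hm
  set c₀ : ℝ := (δ:ℝ) / (m * D) with hc₀
  set t : Fin k → ℝ := fun r => ∑ j : ↥𝓕, E ↑j r with ht
  have hsq : ∀ i j, E i j * E i j = E i j := by
    intro i j; rcases hbin i j with h | h <;> rw [h] <;> ring
  -- key BIBD sums
  have hDj : ∀ j : ↥𝓕, ∑ r, E ↑j r * t r = D := by
    intro j
    calc ∑ r, E ↑j r * t r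
        = ∑ r, ∑ j' : ↥𝓕, E ↑j r * E ↑j' r := by
          refine Finset.sum_congr rfl fun r _ => ?_
          rw [ht]; exact Finset.mul_sum _ _ _
      _ = ∑ j' : ↥𝓕, ∑ r, E ↑j r * E ↑j' r := Finset.sum_comm
      _ = ∑ j' : ↥𝓕, ((lam:ℝ) + if j' = j then (δ:ℝ) - lam else 0) := by
          refine Finset.sum_congr rfl fun j' _ => ?_
          rcases eq_or_ne j' j with h | h
          · subst h
            rw [if_pos rfl]
            simp_rw [hsq]
            rw [hδ]; ring
          · rw [if_neg h, hlam ↑j ↑j' (fun hh => h (Subtype.ext hh.symm))]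
            ring
      _ = D := by
          rw [Finset.sum_add_distrib, Finset.sum_const,
            Finset.sum_ite_eq' Finset.univ j fun _ => (δ:ℝ) - lam]
          simp only [Finset.mem_univ, if_true, Finset.card_univ, Fintype.card_coe,
            nsmul_eq_mul]
          rw [hcard, Nat.cast_sub hs.le, hDdef]
          ring
  have hS1 : ∑ r, t r = ((n:ℝ) - s) * δ := by
    calc ∑ r, t r = ∑ r, ∑ j : ↥𝓕, E ↑j r := by rw [ht]
      _ = ∑ j : ↥𝓕, ∑ r, E ↑j r := Finset.sum_comm
      _ = ∑ _j : ↥𝓕, (δ:ℝ) := by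
          exact Finset.sum_congr rfl fun j _ => hδ ↑j
      _ = ((n:ℝ) - s) * δ := by
          rw [Finset.sum_const, Finset.card_univ, Fintype.card_coe, hcard,
            nsmul_eq_mul, Nat.cast_sub hs.le]
  have hS2 : ∑ r, t r * t r = ((n:ℝ) - s) * D := by
    calc ∑ r, t r * t r
        = ∑ r, ∑ j : ↥𝓕, E ↑j r * t r := by
          refine Finset.sum_congr rfl fun r _ => ?_
          rw [← Finset.sum_mul]
      _ = ∑ j : ↥𝓕, ∑ r, E ↑j r * t r := Finset.sum_comm
      _ = ∑ _j : ↥𝓕, D := Finset.sum_congr rfl fun j _ => hDj j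
      _ = ((n:ℝ) - s) * D := by
          rw [Finset.sum_const, Finset.card_univ, Fintype.card_coe, hcard,
            nsmul_eq_mul, Nat.cast_sub hs.le]
  -- the matrices
  unfold err
  set M : Matrix (Fin m × Fin k) ↥𝓕 ℝ := subCols (stackB fun _ : Fin m => Eᵀ) 𝓕 with hMdef
  set R₀ : Matrix ↥𝓕 (Fin m) ℝ := fun _ _ => c₀ with hR₀def
  have hMe : ∀ (p : Fin m × Fin k) (j : ↥𝓕), M p j = E ↑j p.2 := fun p j => rfl
  have hRe : ∀ (j : ↥𝓕) (i : Fin m), R₀ j i = c₀ := fun _ _ => rfl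
  have hF : ∀ (p : Fin m × Fin k) (i : Fin m),
      Fmat m (Fin k) p i = if p.1 = i then (1:ℝ) else 0 := fun p i => rfl
  have hMR : ∀ (p : Fin m × Fin k) (i : Fin m), (M * R₀) p i = t p.2 * c₀ := by
    intro p i
    rw [Matrix.mul_apply]
    simp only [hMe, hRe]
    rw [← Finset.sum_mul]
  -- normal equations
  have h0 : Mᵀ * (M * R₀ - Fmat m (Fin k)) = 0 := by
    ext j i
    have he : (Mᵀ * (M * R₀ - Fmat m (Fin k))) j i
        = ∑ p : Fin m × Fin k, E ↑j p.2 * (t p.2 * c₀ - if p.1 = i then 1 else 0) := by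
      rw [Matrix.mul_apply]
      refine Finset.sum_congr rfl fun p _ => ?_
      rw [Matrix.transpose_apply, hMe, Matrix.sub_apply, hMR, hF]
    rw [he, Fintype.sum_prod_type, Matrix.zero_apply]
    have hinner : ∀ a : Fin m,
        (∑ r, E ↑j r * (t r * c₀ - if a = i then (1:ℝ) else 0))
        = D * c₀ - (if a = i then (δ:ℝ) else 0) := by
      intro a
      rcases eq_or_ne a i with ha | ha
      · rw [if_pos ha, if_pos ha]
        have e1 : ∀ r, E ↑j r * (t r * c₀ - 1) = (E ↑j r * t r) * c₀ - E ↑j r :=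
          fun r => by ring
        simp_rw [e1]
        rw [Finset.sum_sub_distrib, ← Finset.sum_mul, hDj j, hδ]
      · rw [if_neg ha, if_neg ha]
        have e1 : ∀ r, E ↑j r * (t r * c₀ - 0) = (E ↑j r * t r) * c₀ := fun r => by ring
        simp_rw [e1]
        rw [← Finset.sum_mul, hDj j, sub_zero]
    simp_rw [hinner]
    rw [Finset.sum_sub_distrib, Finset.sum_const,
      Finset.sum_ite_eq' Finset.univ i fun _ => (δ:ℝ)]
    simp only [Finset.mem_univ, if_true, Finset.card_univ, Fintype.card_fin, nsmul_eq_mul]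
    rw [hc₀]
    field_simp
    ring
  -- value at the minimizer
  have fval : frobSq (M * R₀ - Fmat m (Fin k))
      = (m:ℝ) * k - (δ:ℝ) ^ 2 * ((n:ℝ) - s) / D := by
    unfold frobSq
    have hent : ∀ (p : Fin m × Fin k) (i : Fin m),
        ((M * R₀ - Fmat m (Fin k)) p i) ^ 2
        = (t p.2 * c₀) ^ 2 + (if p.1 = i then 1 - 2 * (t p.2 * c₀) else 0) := by
      intro p i
      rw [Matrix.sub_apply, hMR, hF]
      rcases eq_or_ne p.1 i with h | h
      · rw [if_pos h, if_pos h]; ring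
      · rw [if_neg h, if_neg h]; ring
    simp_rw [hent]
    rw [Fintype.sum_prod_type]
    have hin : ∀ (a : Fin m) (r : Fin k),
        (∑ i : Fin m, ((t r * c₀) ^ 2 + if a = i then 1 - 2 * (t r * c₀) else 0))
        = (m:ℝ) * c₀ ^ 2 * (t r * t r) - 2 * c₀ * t r + 1 := by
      intro a r
      rw [Finset.sum_add_distrib, Finset.sum_const,
        Finset.sum_ite_eq Finset.univ a fun _ => 1 - 2 * (t r * c₀)]
      simp only [Finset.mem_univ, if_true, Finset.card_univ, Fintype.card_fin, nsmul_eq_mul]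
      ring
    simp_rw [hin]
    have hr : (∑ r, ((m:ℝ) * c₀ ^ 2 * (t r * t r) - 2 * c₀ * t r + 1))
        = (m:ℝ) * c₀ ^ 2 * (((n:ℝ) - s) * D) - 2 * c₀ * (((n:ℝ) - s) * δ) + k := by
      rw [Finset.sum_add_distrib, Finset.sum_sub_distrib, ← Finset.mul_sum,
        ← Finset.mul_sum, hS2, hS1, Finset.sum_const, Finset.card_univ,
        Fintype.card_fin, nsmul_eq_mul, mul_one]
    rw [hr, Finset.sum_const, Finset.card_univ, Fintype.card_fin, nsmul_eq_mul, hc₀]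
    field_simp
    ring
  -- conclude
  refine le_antisymm ?_ ?_
  · have hb : BddBelow (Set.range fun R : Matrix ↥𝓕 (Fin m) ℝ =>
        frobSq (M * R - Fmat m (Fin k))) := by
      refine ⟨0, ?_⟩
      rintro x ⟨R, rfl⟩
      exact frobSq_nonneg _
    exact le_of_le_of_eq (ciInf_le hb R₀) fval
  · apply le_ciInf
    intro R
    rw [frobSq_split M R R₀ _ h0, fval]
    have := frobSq_nonneg (M * (R - R₀))
    linarith

end
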